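/- Every countably branching process in an LTS can be denoted, up to strong bisimilarity, by a closed CCSP expression using only inaction 0, action prefixing, choice, and (possibly unguarded) recursion; moreover a countable choice ∑_{i∈ℕ} α_i.P_i can be expressed via the unguarded recursive specification ⟨z₀ | {z_i = α_i.P_i + z_{i+1} | i∈ℕ}⟩. -/

import Mathlib

/-- Actions of an LTS with time-outs. -/
inductive Act (A : Type) where
  | vis (a : A)
  | tau
  | to

/-- CCSP expressions built from inaction `0`, action prefixing, binary choice,
variables and recursion `⟨x|S⟩` (a recursive specification `S` binds all
variables of the variable type `V`). -/
inductive Expr (A V : Type) where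
  | nil
  | pre (α : Act A) (E : Expr A V)
  | choice (E F : Expr A V)
  | var (x : V)
  | fix (x : V) (S : V → Expr A V)

/-- Substitution of closed expressions for free variables. -/
def subst {A V : Type} : Expr A V → (V → Expr A V) → Expr A V
  | .nil, _ => .nil
  | .pre α E, σ => .pre α (subst E σ)
  | .choice E F, σ => .choice (subst E σ) (subst F σ)
  | .var x, σ => σ x
  | .fix x S, _ => .fix x S

/-- The operational semantics of the recursive fragment of CCSP. -/
inductive ETr {A V : Type} : Expr A V → Act A → Expr A V → Prop where
  | pre (α : Act A) (E : Expr A V) : ETr (.pre α E) α E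
  | choiceL {E α E'} (F) : ETr E α E' → ETr (.choice E F) α E'
  | choiceR {F α F'} (E) : ETr F α F' → ETr (.choice E F) α F'
  | fix {x S α E'} :
      ETr (subst (S x) (fun y => .fix y S)) α E' → ETr (.fix x S) α E'

/-- Closed expressions: every variable occurrence is bound by a recursion. -/
def Closed {A V : Type} : Expr A V → Prop
  | .nil => True
  | .pre _ E => Closed E
  | .choice E F => Closed E ∧ Closed F
  | .var _ => False
  | .fix _ _ => True

/-- The disjoint union of two LTSs over the same action alphabet. -/
def SumTr {A P1 P2 : Type} (T1 : P1 → Act A → P1 → Prop)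
    (T2 : P2 → Act A → P2 → Prop) : (P1 ⊕ P2) → Act A → (P1 ⊕ P2) → Prop
  | .inl p, α, .inl q => T1 p α q
  | .inr p, α, .inr q => T2 p α q
  | _, _, _ => False

/-- A strong bisimulation. -/
def IsSB {A Proc : Type} (Tr : Proc → Act A → Proc → Prop)
    (B : Proc → Proc → Prop) : Prop :=
  (∀ P Q, B P Q → B Q P) ∧
  (∀ P Q (α : Act A) P', B P Q → Tr P α P' → ∃ Q', Tr Q α Q' ∧ B P' Q')

/-- Strong bisimilarity. -/
def SBisim {A Proc : Type} (Tr : Proc → Act A → Proc → Prop) (P Q : Proc) : Prop :=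
  ∃ B, IsSB Tr B ∧ B P Q

/-- Reachability in an LTS. -/
def Reachable {A Proc : Type} (Tr : Proc → Act A → Proc → Prop) :
    Proc → Proc → Prop :=
  Relation.ReflTransGen (fun P Q => ∃ α, Tr P α Q)

/-- A process is countably branching if every reachable state has countably
many outgoing transitions. -/
def CountablyBranching {A Proc : Type} (Tr : Proc → Act A → Proc → Prop)
    (P : Proc) : Prop :=
  ∀ Q, Reachable Tr P Q → Countable {x : Act A × Proc // Tr Q x.1 x.2}

section Aux

variable {A V Proc : Type}

lemma subst_closed : ∀ (E : Expr A V) (σ : V → Expr A V), Closed E → subst E σ = E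
  | .nil, _, _ => rfl
  | .pre α E, σ, h => by simp [subst, subst_closed E σ h]
  | .choice E F, σ, h => by
      simp [subst, subst_closed E σ h.1, subst_closed F σ h.2]
  | .var x, _, h => absurd h (by simp [Closed])
  | .fix x S, _, _ => rfl

/-- The specification used to express a countable sum of prefixes of states. -/
def mkS (f : Proc → ℕ → Option (Act A × Proc)) (p : Proc × ℕ) :
    Expr A (Proc × ℕ) :=
  match f p.1 p.2 with
  | some x => .choice (.pre x.1 (.var (x.2, 0))) (.var (p.1, p.2 + 1))
  | none => .var (p.1, p.2 + 1)

lemma subst_mkS (f : Proc → ℕ → Option (Act A × Proc)) (Q : Proc) (n : ℕ)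
    (σ : Proc × ℕ → Expr A (Proc × ℕ)) :
    subst (mkS f (Q, n)) σ =
      match f Q n with
      | some x => .choice (.pre x.1 (σ (x.2, 0))) (σ (Q, n + 1))
      | none => σ (Q, n + 1) := by
  rcases e : f Q n with _ | x <;> simp [mkS, e, subst]

lemma mkS_forward (f : Proc → ℕ → Option (Act A × Proc))
    {G : Expr A (Proc × ℕ)} {β : Act A} {F : Expr A (Proc × ℕ)}
    (h : ETr G β F) :
    ∀ Q n, (G = .fix (Q, n) (mkS f) ∨
        G = subst (mkS f (Q, n)) (fun y => .fix y (mkS f))) →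
      ∃ m R, n ≤ m ∧ f Q m = some (β, R) ∧ F = .fix (R, 0) (mkS f) := by
  induction h with
  | pre α E =>
    rintro Q n (h | h)
    · exact absurd h (by simp)
    · rw [subst_mkS] at h
      rcases e : f Q n with _ | x <;> simp [e] at h
  | choiceL F h ih =>
    rintro Q n (hG | hG)
    · exact absurd hG (by simp)
    · rw [subst_mkS] at hG
      rcases e : f Q n with _ | x
      · simp [e] at hG
      · simp only [e] at hG
        obtain ⟨h1, h2⟩ := Expr.choice.inj hG
        subst h1
        cases h
        exact ⟨n, x.2, le_refl n, by simpa using e, rfl⟩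
  | choiceR E h ih =>
    rintro Q n (hG | hG)
    · exact absurd hG (by simp)
    · rw [subst_mkS] at hG
      rcases e : f Q n with _ | x
      · simp [e] at hG
      · simp only [e] at hG
        obtain ⟨h1, h2⟩ := Expr.choice.inj hG
        subst h2
        obtain ⟨m, R, hm, hfm, hF⟩ := ih Q (n + 1) (Or.inl rfl)
        exact ⟨m, R, le_trans (Nat.le_succ n) hm, hfm, hF⟩
  | fix h ih =>
    rename_i x S α E'
    rintro Q n (hG | hG)
    · obtain ⟨h1, h2⟩ := Expr.fix.inj hG
      subst h2
      exact ih Q n (Or.inr (by rw [h1]))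
    · rw [subst_mkS] at hG
      rcases e : f Q n with _ | y
      · simp only [e] at hG
        obtain ⟨h1, h2⟩ := Expr.fix.inj hG
        subst h2
        obtain ⟨m, R, hm, hfm, hF⟩ := ih Q (n + 1) (Or.inr (by rw [h1]))
        exact ⟨m, R, le_trans (Nat.le_succ n) hm, hfm, hF⟩
      · simp [e] at hG

lemma mkS_back (f : Proc → ℕ → Option (Act A × Proc)) :
    ∀ (d : ℕ) (Q : Proc) (n : ℕ) (β : Act A) (R : Proc),
      f Q (n + d) = some (β, R) →
      ETr (A := A) (.fix (Q, n) (mkS f)) β (.fix (R, 0) (mkS f)) := by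
  intro d
  induction d with
  | zero =>
    intro Q n β R h
    apply ETr.fix
    rw [subst_mkS]
    simp only [Nat.add_zero] at h
    simp only [h]
    exact ETr.choiceL _ (ETr.pre β _)
  | succ d ih =>
    intro Q n β R h
    have h' : f Q ((n + 1) + d) = some (β, R) := by
      rw [show (n + 1) + d = n + (d + 1) by omega]; exact h
    apply ETr.fix
    rw [subst_mkS]
    rcases e : f Q n with _ | x
    · simp only [e]
      exact ih Q (n + 1) β R h'
    · simp only [e]
      exact ETr.choiceR _ (ih Q (n + 1) β R h')

/-- The specification for part 2. -/
def mkT (α : ℕ → Act A) (E : ℕ → Expr A ℕ) (i : ℕ) : Expr A ℕ :=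
  .choice (.pre (α i) (E i)) (.var (i + 1))

lemma subst_mkT (α : ℕ → Act A) (E : ℕ → Expr A ℕ) (hE : ∀ i, Closed (E i))
    (n : ℕ) (σ : ℕ → Expr A ℕ) :
    subst (mkT α E n) σ = .choice (.pre (α n) (E n)) (σ (n + 1)) := by
  simp [mkT, subst, subst_closed _ _ (hE n)]

lemma mkT_forward (α : ℕ → Act A) (E : ℕ → Expr A ℕ) (hE : ∀ i, Closed (E i))
    {G : Expr A ℕ} {β : Act A} {F : Expr A ℕ} (h : ETr G β F) :
    ∀ n, (G = .fix n (mkT α E) ∨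
        G = subst (mkT α E n) (fun y => .fix y (mkT α E))) →
      ∃ i, β = α i ∧ F = E i := by
  induction h with
  | pre γ G' =>
    rintro n (h | h)
    · exact absurd h (by simp)
    · rw [subst_mkT α E hE] at h
      simp at h
  | choiceL F h ih =>
    rintro n (hG | hG)
    · exact absurd hG (by simp)
    · rw [subst_mkT α E hE] at hG
      obtain ⟨h1, h2⟩ := Expr.choice.inj hG
      subst h1
      cases h
      exact ⟨n, rfl, rfl⟩
  | choiceR Eb h ih =>
    rintro n (hG | hG)
    · exact absurd hG (by simp)
    · rw [subst_mkT α E hE] at hG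
      obtain ⟨h1, h2⟩ := Expr.choice.inj hG
      subst h2
      exact ih (n + 1) (Or.inl rfl)
  | fix h ih =>
    rename_i x S γ E'
    rintro n (hG | hG)
    · obtain ⟨h1, h2⟩ := Expr.fix.inj hG
      subst h2
      exact ih n (Or.inr (by rw [h1]))
    · rw [subst_mkT α E hE] at hG
      simp at hG

lemma mkT_back (α : ℕ → Act A) (E : ℕ → Expr A ℕ) (hE : ∀ i, Closed (E i)) :
    ∀ (d n : ℕ), ETr (.fix n (mkT α E)) (α (n + d)) (E (n + d)) := by
  intro d
  induction d with
  | zero =>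
    intro n
    apply ETr.fix
    rw [subst_mkT α E hE]
    simpa using ETr.choiceL (A := A) _ (ETr.pre (α n) (E n))
  | succ d ih =>
    intro n
    apply ETr.fix
    rw [subst_mkT α E hE]
    have := ih (n + 1)
    rw [show (n + 1) + d = n + (d + 1) by omega] at this
    exact ETr.choiceR _ this

end Aux

/-- Every countably branching process can be denoted, up to strong
bisimilarity, by a closed CCSP expression using only inaction, action
prefixing, choice and (possibly unguarded) recursion; moreover the countable
choice `∑_{i∈ℕ} α_i.P_i` is expressed by the unguarded recursive specification
`⟨z₀ | {z_i = α_i.P_i + z_{i+1} | i ∈ ℕ}⟩`. -/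


theorem countably_branching_expressible {A Proc : Type}
    (Tr : Proc → Act A → Proc → Prop) :
    (∀ P : Proc, CountablyBranching Tr P →
      ∃ E : Expr A (Proc × ℕ), Closed E ∧
        SBisim (SumTr Tr (ETr (A := A) (V := Proc × ℕ)))
          (Sum.inl P) (Sum.inr E)) ∧
    (∀ (α : ℕ → Act A) (E : ℕ → Expr A ℕ), (∀ i, Closed (E i)) →
      ∀ (β : Act A) (F : Expr A ℕ),
        ETr (Expr.fix 0
            (fun i => Expr.choice (Expr.pre (α i) (E i)) (Expr.var (i + 1)))) β F
          ↔ ∃ i, β = α i ∧ F = E i) := by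
  constructor
  · intro P cb
    -- choose an enumeration of the transitions of each reachable state
    have key : ∀ Q : Proc, ∃ f : ℕ → Option (Act A × Proc),
        Reachable Tr P Q → ∀ (γ : Act A) (R : Proc),
          (Tr Q γ R ↔ ∃ n, f n = some (γ, R)) := by
      intro Q
      by_cases h : Reachable Tr P Q
      · haveI := cb Q h
        obtain ⟨g, hg⟩ :=
          exists_surjective_nat (Option {x : Act A × Proc // Tr Q x.1 x.2})
        refine ⟨fun n => (g n).map Subtype.val, fun _ γ R => ⟨fun hT => ?_, ?_⟩⟩
        · obtain ⟨n, hn⟩ := hg (some ⟨(γ, R), hT⟩)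
          exact ⟨n, by simp [hn]⟩
        · rintro ⟨n, hn⟩
          rcases e : g n with _ | x
          · simp [e] at hn
          · simp only [e, Option.map_some] at hn
            have : x.val = (γ, R) := Option.some.inj hn
            have hx := x.property
            rw [this] at hx
            exact hx
      · exact ⟨fun _ => none, fun h' => absurd h' h⟩
    choose f hf using key
    refine ⟨.fix (P, 0) (mkS f), trivial, ?_⟩
    refine ⟨fun X Y => ∃ Q, Reachable Tr P Q ∧
      ((X = .inl Q ∧ Y = .inr (.fix (Q, 0) (mkS f))) ∨
       (Y = .inl Q ∧ X = .inr (.fix (Q, 0) (mkS f)))), ⟨?_, ?_⟩,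
      ⟨P, Relation.ReflTransGen.refl, Or.inl ⟨rfl, rfl⟩⟩⟩
    · rintro X Y ⟨Q, hQ, h | h⟩
      · exact ⟨Q, hQ, Or.inr h⟩
      · exact ⟨Q, hQ, Or.inl h⟩
    · rintro X Y γ X' ⟨Q, hQ, ⟨rfl, rfl⟩ | ⟨rfl, rfl⟩⟩ hT
      · -- X = inl Q
        rcases X' with R | _
        · have hTr : Tr Q γ R := hT
          obtain ⟨n, hn⟩ := ((hf Q hQ γ R).1 hTr)
          refine ⟨.inr (.fix (R, 0) (mkS f)), ?_, R,
            hQ.tail ⟨γ, hTr⟩, Or.inl ⟨rfl, rfl⟩⟩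
          exact mkS_back f n Q 0 γ R (by simpa using hn)
        · exact absurd hT (by simp [SumTr])
      · -- X = inr (fix (Q,0))
        rcases X' with _ | F
        · exact absurd hT (by simp [SumTr])
        · have hE : ETr (.fix (Q, 0) (mkS f)) γ F := hT
          obtain ⟨m, R, _, hfm, rfl⟩ := mkS_forward f hE Q 0 (Or.inl rfl)
          have hTr : Tr Q γ R := (hf Q hQ γ R).2 ⟨m, hfm⟩
          exact ⟨.inl R, hTr, R, hQ.tail ⟨γ, hTr⟩, Or.inr ⟨rfl, rfl⟩⟩
  · intro α E hE β F
    constructor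
    · intro h
      exact mkT_forward α E hE h 0 (Or.inl rfl)
    · rintro ⟨i, rfl, rfl⟩
      have := mkT_back α E hE i 0
      simp only [Nat.zero_add] at this
      exact this
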